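/- Let P_0 be a probability measure on [0,1] with density p_0 satisfying inf_{x∈[0,1]} p_0(x) ≥ c_0 > 0. Fix ε > 0, let N = ⌈1/ε⌉ and partition [0,1] into intervals I_j of length ε (the last possibly longer), and let I_{jk} = ∪_{l=j}^{j+k−1} I_l. If a probability measure P on [0,1] satisfies P(I_{jk}) − P_0(I_{jk}) ≤ c_0 ε / 2 for all j, k, then W_∞(P, P_0) ≤ 2ε. -/

import Mathlib

open MeasureTheory ENNReal

/-- The `j`-th interval of the `ε`-grid on `[0,1]` with `N` cells:
`I_j = [(j-1)ε, jε)` for `j < N`, and `I_N = [(N-1)ε, 1]`. -/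
noncomputable def gridInterval (ε : ℝ) (N : ℕ) (j : ℕ) : Set ℝ :=
  if j = N then Set.Icc ((N - 1 : ℝ) * ε) 1
  else Set.Ico ((j - 1 : ℝ) * ε) ((j : ℝ) * ε)

/-- `I_{jk} = ∪_{l=j}^{j+k-1} I_l`. -/
noncomputable def gridUnion (ε : ℝ) (N : ℕ) (j k : ℕ) : Set ℝ :=
  ⋃ l ∈ Finset.Icc j (j + k - 1), gridInterval ε N l

lemma measurableSet_gridInterval (ε : ℝ) (N l : ℕ) :
    MeasurableSet (gridInterval ε N l) := by
  unfold gridInterval; split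
  · exact measurableSet_Icc
  · exact measurableSet_Ico

lemma gi_subset_Ici (ε : ℝ) (N l : ℕ) :
    gridInterval ε N l ⊆ Set.Ici (((l : ℝ) - 1) * ε) := by
  unfold gridInterval; split
  · next h => subst h; exact fun x hx => hx.1
  · exact fun x hx => hx.1

lemma gi_subset_Iic (ε : ℝ) (N l : ℕ) (hε : 0 < ε) (hNε : 1 ≤ (N : ℝ) * ε) (hl : l ≤ N) :
    gridInterval ε N l ⊆ Set.Iic ((l : ℝ) * ε) := by
  unfold gridInterval; split
  · next h => subst h; exact fun x hx => hx.2.trans hNε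
  · exact fun x hx => le_of_lt hx.2

lemma gi_subset_Iio (ε : ℝ) (N l : ℕ) (hl : l < N) :
    gridInterval ε N l ⊆ Set.Iio ((l : ℝ) * ε) := by
  unfold gridInterval
  rw [if_neg hl.ne]
  exact fun x hx => hx.2

lemma gi_mem_left (ε : ℝ) (N l : ℕ) (hε : 0 < ε) (hN1 : ((N : ℝ) - 1) * ε ≤ 1) :
    ((l : ℝ) - 1) * ε ∈ gridInterval ε N l := by
  unfold gridInterval; split
  · next h => subst h; exact ⟨le_refl _, hN1⟩
  · constructor
    · exact le_refl _
    · nlinarith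

lemma gi_dist (ε : ℝ) (N l : ℕ) (hε : 0 < ε) (hNε : 1 ≤ (N : ℝ) * ε) (hl : l ≤ N)
    {x y : ℝ} (hx : x ∈ gridInterval ε N l) (hy : y ∈ gridInterval ε N l) :
    dist x y ≤ ε := by
  rw [Real.dist_eq, abs_le]
  unfold gridInterval at hx hy
  by_cases h : l = N
  · subst h
    rw [if_pos rfl] at hx hy
    obtain ⟨hx1, hx2⟩ := hx; obtain ⟨hy1, hy2⟩ := hy
    constructor <;> nlinarith
  · rw [if_neg h] at hx hy
    obtain ⟨hx1, hx2⟩ := hx; obtain ⟨hy1, hy2⟩ := hy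
    constructor <;> nlinarith

lemma gi_cover (ε : ℝ) (N : ℕ) (hε : 0 < ε) (hN : N = ⌈1 / ε⌉₊)
    {x : ℝ} (hx : x ∈ Set.Icc (0 : ℝ) 1) :
    ∃ l, 1 ≤ l ∧ l ≤ N ∧ x ∈ gridInterval ε N l ∧ (x < ((N : ℝ) - 1) * ε → l < N) := by
  have hN1 : 1 ≤ N := by
    rw [hN]; exact Nat.one_le_ceil_iff.mpr (by positivity)
  by_cases hbig : ((N : ℝ) - 1) * ε ≤ x
  · refine ⟨N, hN1, le_refl _, ?_, fun h => absurd hbig (not_le.mpr h)⟩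
    unfold gridInterval
    rw [if_pos rfl]
    exact ⟨hbig, hx.2⟩
  · push_neg at hbig
    refine ⟨⌊x / ε⌋₊ + 1, le_add_self, ?_, ?_, fun _ => ?_⟩
    all_goals {
      have hx0 := hx.1
      have hfl : (⌊x / ε⌋₊ : ℝ) ≤ x / ε := Nat.floor_le (by positivity)
      have hfu : x / ε < (⌊x / ε⌋₊ : ℝ) + 1 := Nat.lt_floor_add_one _
      have hlt : ⌊x / ε⌋₊ + 1 < N := by
        have : x / ε < (N : ℝ) - 1 := by
          rw [div_lt_iff₀ hε]; linarith
        have h2 : (⌊x / ε⌋₊ : ℝ) < (N : ℝ) - 1 := lt_of_le_of_lt hfl this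
        have h3 : (⌊x / ε⌋₊ : ℝ) + 1 < (N:ℝ) := by linarith
        exact_mod_cast h3
      first
      | exact hlt.le
      | exact hlt
      | { unfold gridInterval
          rw [if_neg hlt.ne]
          push_cast
          have hde : x / ε * ε = x := div_mul_cancel₀ x hε.ne'
          have h1 : (⌊x / ε⌋₊ : ℝ) * ε ≤ x := by
            nlinarith [mul_le_mul_of_nonneg_right hfl hε.le]
          have h2 : x < ((⌊x / ε⌋₊ : ℝ) + 1) * ε := by
            nlinarith [mul_lt_mul_of_pos_right hfu hε]
          constructor
          · linarith
          · linarith }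
    }

lemma run_extract (N : ℕ) (S : Finset ℕ) (j : ℕ) (hj : j ∈ S)
    (hmin : ∀ l ∈ S, j ≤ l) (hub : ∀ l ∈ S, l ≤ N) :
    ∃ e, j ≤ e ∧ e ≤ N ∧ (∀ m, j ≤ m → m ≤ e → m ∈ S) ∧
      ∀ l ∈ S, l ∉ Finset.Icc j e → e + 2 ≤ l := by
  classical
  set E := (Finset.Icc j N).filter (fun m => ∀ i, j ≤ i → i ≤ m → i ∈ S) with hE
  have hjE : j ∈ E := by
    simp only [hE, Finset.mem_filter, Finset.mem_Icc]
    exact ⟨⟨le_refl _, hub j hj⟩, fun i h1 h2 => by rwa [le_antisymm h2 h1]⟩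
  have hEne : E.Nonempty := ⟨j, hjE⟩
  set e := E.max' hEne with he
  have heE : e ∈ E := E.max'_mem hEne
  simp only [hE, Finset.mem_filter, Finset.mem_Icc] at heE
  refine ⟨e, heE.1.1, heE.1.2, heE.2, fun l hl hl2 => ?_⟩
  rw [Finset.mem_Icc] at hl2
  push_neg at hl2
  have hjl := hmin l hl
  have hgt : e + 1 ≤ l := hl2 hjl
  by_contra hcon
  push_neg at hcon
  have hleq : l = e + 1 := by omega
  have : e + 1 ∈ E := by
    simp only [hE, Finset.mem_filter, Finset.mem_Icc]
    refine ⟨⟨by omega, by have := hub l hl; omega⟩, fun i h1 h2 => ?_⟩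
    rcases Nat.lt_or_ge i (e+1) with h | h
    · exact heE.2 i h1 (by omega)
    · have : i = e + 1 := by omega
      rw [this, ← hleq]; exact hl
  have := Finset.le_max' E _ this
  omega

lemma runLemmaAux (ε c₀ : ℝ) (hε : 0 < ε) (hc₀ : 0 < c₀) (N : ℕ)
    (hNε : 1 ≤ (N : ℝ) * ε) (hN1 : ((N : ℝ) - 1) * ε ≤ 1)
    (P P₀ : Measure ℝ)
    (hIoo : ∀ a b : ℝ, 0 ≤ a → b ≤ 1 → ENNReal.ofReal (c₀ * (b - a)) ≤ P₀ (Set.Ioo a b))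
    (hcl : ∀ j k : ℕ, 1 ≤ j → 1 ≤ k → j + k - 1 ≤ N →
      P (gridUnion ε N j k) ≤ P₀ (gridUnion ε N j k) + ENNReal.ofReal (c₀ * ε / 2)) :
    ∀ n (S : Finset ℕ), S.card ≤ n → ∀ j₀ : ℕ, 2 ≤ j₀ →
      (∀ l ∈ S, j₀ ≤ l ∧ l ≤ N) →
      P (⋃ l ∈ S, gridInterval ε N l) ≤
        P₀ (Metric.thickening ε (⋃ l ∈ S, gridInterval ε N l) ∩
          Set.Ioi (((j₀ : ℝ) - 1) * ε - ε / 2)) := by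
  intro n
  induction n with
  | zero =>
      intro S hcard j₀ _ _
      have hSe : S = ∅ := Finset.card_eq_zero.mp (Nat.le_zero.mp hcard)
      subst hSe
      simp
  | succ n ih =>
      intro S hcard j₀ hj₀ hS
      rcases S.eq_empty_or_nonempty with rfl | hne
      · simp
      classical
      set j := S.min' hne with hjdef
      have hjS : j ∈ S := S.min'_mem hne
      have hmin : ∀ l ∈ S, j ≤ l := fun l hl => S.min'_le l hl
      obtain ⟨e, hje, heN, hrun, hgap⟩ :=
        run_extract N S j hjS hmin (fun l hl => (hS l hl).2)
      have hj₀j : j₀ ≤ j := (hS j hjS).1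
      set S' := S \ Finset.Icc j e with hS'def
      have hIccS : Finset.Icc j e ⊆ S := fun m hm => by
        rw [Finset.mem_Icc] at hm; exact hrun m hm.1 hm.2
      have hS'mem : ∀ l ∈ S', e + 2 ≤ l ∧ l ≤ N := fun l hl => by
        have h1 := Finset.mem_sdiff.mp hl
        exact ⟨hgap l h1.1 h1.2, (hS l h1.1).2⟩
      have hcard' : S'.card ≤ n := by
        have hjnot : j ∉ S' := by
          intro h
          rw [hS'def, Finset.mem_sdiff] at h
          exact h.2 (Finset.mem_Icc.mpr ⟨le_refl j, hje⟩)
        have hlt : S'.card < S.card :=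
          Finset.card_lt_card ((Finset.ssubset_iff_of_subset Finset.sdiff_subset).mpr
            ⟨j, hjS, hjnot⟩)
        exact Nat.lt_succ_iff.mp (lt_of_lt_of_le hlt hcard)
      -- real casts
      have hjR : (j₀ : ℝ) ≤ (j : ℝ) := Nat.cast_le.mpr hj₀j
      have hjeR : (j : ℝ) ≤ (e : ℝ) := Nat.cast_le.mpr hje
      have heNR : (e : ℝ) ≤ (N : ℝ) := Nat.cast_le.mpr heN
      have hj2R : (2 : ℝ) ≤ (j : ℝ) := by
        have : (2:ℕ) ≤ j := le_trans hj₀ hj₀j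
        exact_mod_cast this
      -- sets
      set U := ⋃ l ∈ S, gridInterval ε N l with hU
      set U' := ⋃ l ∈ S', gridInterval ε N l with hU'
      set B₁ := gridUnion ε N j (e - j + 1) with hB₁def
      have hB₁eq : B₁ = ⋃ l ∈ Finset.Icc j e, gridInterval ε N l := by
        rw [hB₁def]
        unfold gridUnion
        have h : j + (e - j + 1) - 1 = e := by omega
        rw [h]
      set B₂ := Set.Ioo (((j : ℝ) - 1) * ε - ε / 2) (((j : ℝ) - 1) * ε) with hB₂def
      set B₃ := Metric.thickening ε U' ∩ Set.Ioi ((e : ℝ) * ε + ε / 2) with hB₃def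
      have hdecomp : U = B₁ ∪ U' := by
        rw [hB₁eq, hU, hU']
        have h := Finset.union_sdiff_of_subset hIccS
        rw [← Finset.set_biUnion_union, h]
      -- interval bounds
      have hB₁Ici : B₁ ⊆ Set.Ici (((j : ℝ) - 1) * ε) := by
        rw [hB₁eq]
        refine Set.iUnion₂_subset fun l hl => (gi_subset_Ici ε N l).trans ?_
        rw [Finset.mem_Icc] at hl
        have : (j : ℝ) ≤ (l : ℝ) := Nat.cast_le.mpr hl.1
        exact Set.Ici_subset_Ici.mpr (by nlinarith)
      have hB₁Iic : B₁ ⊆ Set.Iic ((e : ℝ) * ε) := by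
        rw [hB₁eq]
        refine Set.iUnion₂_subset fun l hl => ?_
        rw [Finset.mem_Icc] at hl
        refine (gi_subset_Iic ε N l hε hNε (le_trans hl.2 heN)).trans ?_
        have : (l : ℝ) ≤ (e : ℝ) := Nat.cast_le.mpr hl.2
        exact Set.Iic_subset_Iic.mpr (by nlinarith)
      -- disjointness
      have d12 : Disjoint B₁ B₂ := by
        rw [Set.disjoint_right]
        intro x hx2 hx1
        have := hB₁Ici hx1
        simp only [Set.mem_Ici] at this
        exact absurd hx2.2 (not_lt.mpr this)
      have d13 : Disjoint B₁ B₃ := by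
        rw [Set.disjoint_left]
        intro x hx1 hx3
        have h1 := hB₁Iic hx1
        simp only [Set.mem_Iic] at h1
        have h2 := hx3.2
        simp only [Set.mem_Ioi] at h2
        linarith
      have d23 : Disjoint B₂ B₃ := by
        rw [Set.disjoint_left]
        intro x hx2 hx3
        have h2 := hx3.2
        simp only [Set.mem_Ioi] at h2
        have := hx2.2
        nlinarith
      -- measurability
      have mB₁ : MeasurableSet B₁ := by
        rw [hB₁eq]
        exact MeasurableSet.biUnion (Finset.Icc j e).countable_toSet
          fun l _ => measurableSet_gridInterval ε N l
      have mB₂ : MeasurableSet B₂ := measurableSet_Ioo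
      have mB₃ : MeasurableSet B₃ :=
        Metric.isOpen_thickening.measurableSet.inter measurableSet_Ioi
      -- inclusions in target
      set T := Metric.thickening ε U ∩ Set.Ioi (((j₀ : ℝ) - 1) * ε - ε / 2) with hT
      have hB₁U : B₁ ⊆ U := by
        rw [hB₁eq, hU]
        exact Set.biUnion_subset_biUnion_left (by exact_mod_cast hIccS)
      have hU'U : U' ⊆ U := by
        rw [hU, hU']
        exact Set.biUnion_subset_biUnion_left
          (by exact_mod_cast (Finset.sdiff_subset : S' ⊆ S))
      have hsub : B₁ ∪ B₂ ∪ B₃ ⊆ T := by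
        rw [hT]
        refine Set.union_subset (Set.union_subset ?_ ?_) ?_
        · intro x hx
          refine ⟨Metric.self_subset_thickening hε U (hB₁U hx), ?_⟩
          have := hB₁Ici hx
          simp only [Set.mem_Ici] at this
          simp only [Set.mem_Ioi]
          nlinarith
        · intro x hx
          obtain ⟨hxa, hxb⟩ := hx
          constructor
          · rw [Metric.mem_thickening_iff]
            refine ⟨((j : ℝ) - 1) * ε, ?_, ?_⟩
            · exact Set.mem_biUnion hjS (gi_mem_left ε N j hε hN1)
            · rw [Real.dist_eq, abs_lt]
              constructor <;> linarith
          · simp only [Set.mem_Ioi]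
            nlinarith
        · intro x hx
          refine ⟨Metric.thickening_subset_of_subset ε hU'U hx.1, ?_⟩
          have := hx.2
          simp only [Set.mem_Ioi] at this ⊢
          nlinarith
      -- B₂ measure lower bound
      have hB₂P₀ : ENNReal.ofReal (c₀ * ε / 2) ≤ P₀ B₂ := by
        have h := hIoo (((j : ℝ) - 1) * ε - ε / 2) (((j : ℝ) - 1) * ε)
          (by nlinarith) (by nlinarith)
        have heq : c₀ * (((j : ℝ) - 1) * ε - (((j : ℝ) - 1) * ε - ε / 2)) = c₀ * ε / 2 := by
          ring
        rwa [heq] at h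
      -- IH
      have hIH : P U' ≤ P₀ B₃ := by
        have h := ih S' hcard' (e + 2) (by omega)
          (fun l hl => hS'mem l hl)
        have hcast : (((e + 2 : ℕ) : ℝ) - 1) * ε - ε / 2 = (e : ℝ) * ε + ε / 2 := by
          push_cast; ring
        rwa [hcast] at h
      -- hcl
      have hclB₁ : P B₁ ≤ P₀ B₁ + ENNReal.ofReal (c₀ * ε / 2) := by
        rw [hB₁def]
        exact hcl j (e - j + 1) (by omega) (by omega) (by omega)
      calc P U = P (B₁ ∪ U') := by rw [hdecomp]
        _ ≤ P B₁ + P U' := measure_union_le _ _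
        _ ≤ (P₀ B₁ + ENNReal.ofReal (c₀ * ε / 2)) + P₀ B₃ := add_le_add hclB₁ hIH
        _ ≤ (P₀ B₁ + P₀ B₂) + P₀ B₃ := by gcongr
        _ = P₀ (B₁ ∪ B₂ ∪ B₃) := by
            rw [measure_union (Set.disjoint_union_left.mpr ⟨d13, d23⟩) mB₃,
              measure_union d12 mB₂]
        _ ≤ P₀ T := measure_mono hsub

lemma firstRunCase (ε c₀ : ℝ) (hε : 0 < ε) (hc₀ : 0 < c₀) (N : ℕ)
    (hNε : 1 ≤ (N : ℝ) * ε) (hN1 : ((N : ℝ) - 1) * ε ≤ 1)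
    (P P₀ : Measure ℝ)
    (hIoo : ∀ a b : ℝ, 0 ≤ a → b ≤ 1 → ENNReal.ofReal (c₀ * (b - a)) ≤ P₀ (Set.Ioo a b))
    (hcl : ∀ j k : ℕ, 1 ≤ j → 1 ≤ k → j + k - 1 ≤ N →
      P (gridUnion ε N j k) ≤ P₀ (gridUnion ε N j k) + ENNReal.ofReal (c₀ * ε / 2))
    (S : Finset ℕ) (e : ℕ) (h1e : 1 ≤ e) (hbig : e + 1 < N)
    (hrun : ∀ m, 1 ≤ m → m ≤ e → m ∈ S)
    (hgap : ∀ l ∈ S, l ∉ Finset.Icc 1 e → e + 2 ≤ l)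
    (hlb : ∀ l ∈ S, 1 ≤ l) (hub : ∀ l ∈ S, l ≤ N) :
    P (⋃ l ∈ S, gridInterval ε N l) ≤
      P₀ (Metric.thickening ε (⋃ l ∈ S, gridInterval ε N l)) := by
  classical
  set C := ⋃ l ∈ S, gridInterval ε N l with hCdef
  have he2N : e + 2 ≤ N := hbig
  have heR : (e : ℝ) + 2 ≤ (N : ℝ) := by exact_mod_cast he2N
  have h1eR : (1 : ℝ) ≤ (e : ℝ) := by exact_mod_cast h1e
  set S' := S \ Finset.Icc 1 e with hS'def
  set U' := ⋃ l ∈ S', gridInterval ε N l with hU'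
  set B₁ := gridUnion ε N 1 e with hB₁def
  have hIccS : Finset.Icc 1 e ⊆ S := fun m hm => by
    rw [Finset.mem_Icc] at hm; exact hrun m hm.1 hm.2
  have hB₁eq : B₁ = ⋃ l ∈ Finset.Icc 1 e, gridInterval ε N l := by
    rw [hB₁def]
    unfold gridUnion
    have h : 1 + e - 1 = e := by omega
    rw [h]
  set B₂ := Set.Ioo ((e : ℝ) * ε) ((e : ℝ) * ε + ε / 2) with hB₂def
  set B₃ := Metric.thickening ε U' ∩ Set.Ioi ((e : ℝ) * ε + ε / 2) with hB₃def
  have hdecomp : C = B₁ ∪ U' := by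
    rw [hB₁eq, hCdef, hU']
    have h := Finset.union_sdiff_of_subset hIccS
    rw [← Finset.set_biUnion_union, h]
  have hB₁Iio : B₁ ⊆ Set.Iio ((e : ℝ) * ε) := by
    rw [hB₁eq]
    refine Set.iUnion₂_subset fun l hl => ?_
    rw [Finset.mem_Icc] at hl
    refine (gi_subset_Iio ε N l (by omega)).trans ?_
    have hle : (l : ℝ) ≤ (e : ℝ) := by exact_mod_cast hl.2
    exact Set.Iio_subset_Iio (mul_le_mul_of_nonneg_right hle hε.le)
  have d12 : Disjoint B₁ B₂ := by
    rw [Set.disjoint_left]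
    intro x hx1 hx2
    have := hB₁Iio hx1
    simp only [Set.mem_Iio] at this
    exact absurd hx2.1 (not_lt.mpr this.le)
  have d13 : Disjoint B₁ B₃ := by
    rw [Set.disjoint_left]
    intro x hx1 hx3
    have h1 := hB₁Iio hx1
    simp only [Set.mem_Iio] at h1
    have h2 := hx3.2
    simp only [Set.mem_Ioi] at h2
    linarith
  have d23 : Disjoint B₂ B₃ := by
    rw [Set.disjoint_left]
    intro x hx2 hx3
    have h2 := hx3.2
    simp only [Set.mem_Ioi] at h2
    exact absurd hx2.2 (not_lt.mpr h2.le)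
  have mB₂ : MeasurableSet B₂ := measurableSet_Ioo
  have mB₃ : MeasurableSet B₃ :=
    Metric.isOpen_thickening.measurableSet.inter measurableSet_Ioi
  have hB₁C : B₁ ⊆ C := by
    rw [hB₁eq, hCdef]
    exact Set.biUnion_subset_biUnion_left (by exact_mod_cast hIccS)
  have hU'C : U' ⊆ C := by
    rw [hCdef, hU']
    exact Set.biUnion_subset_biUnion_left
      (by exact_mod_cast (Finset.sdiff_subset : S' ⊆ S))
  have hsub : B₁ ∪ B₂ ∪ B₃ ⊆ Metric.thickening ε C := by
    refine Set.union_subset (Set.union_subset ?_ ?_) ?_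
    · exact fun x hx => Metric.self_subset_thickening hε C (hB₁C hx)
    · intro x hx
      rw [Metric.mem_thickening_iff]
      set y := max (((e : ℝ) - 1) * ε) ((e : ℝ) * ε - ε / 4) with hy
      have hεq : ((e : ℝ) - 1) * ε = (e : ℝ) * ε - ε := by ring
      have hyI : y ∈ gridInterval ε N e := by
        unfold gridInterval
        rw [if_neg (by omega : e ≠ N)]
        constructor
        · exact le_max_left _ _
        · apply max_lt
          · linarith
          · linarith
      refine ⟨y, Set.mem_biUnion (hrun e h1e (le_refl e)) hyI, ?_⟩
      have hy1 : (e : ℝ) * ε - ε / 4 ≤ y := le_max_right _ _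
      have hy2 : y < (e : ℝ) * ε := by
        rw [hy]; apply max_lt
        · linarith
        · linarith
      rw [Real.dist_eq, abs_lt]
      obtain ⟨hxa, hxb⟩ := hx
      constructor <;> linarith
    · intro x hx
      exact Metric.thickening_subset_of_subset ε hU'C hx.1
  have hB₂P₀ : ENNReal.ofReal (c₀ * ε / 2) ≤ P₀ B₂ := by
    have ha0 : (0:ℝ) ≤ (e : ℝ) * ε := by positivity
    have k1 : (e : ℝ) * ε ≤ ((N : ℝ) - 2) * ε :=
      mul_le_mul_of_nonneg_right (by linarith) hε.le
    have k2 : ((N : ℝ) - 2) * ε = ((N : ℝ) - 1) * ε - ε := by ring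
    have h := hIoo ((e : ℝ) * ε) ((e : ℝ) * ε + ε / 2)
      ha0 (by linarith)
    have heq : c₀ * ((e : ℝ) * ε + ε / 2 - (e : ℝ) * ε) = c₀ * ε / 2 := by ring
    rwa [heq] at h
  have hIH : P U' ≤ P₀ B₃ := by
    have hS'mem : ∀ l ∈ S', e + 2 ≤ l ∧ l ≤ N := fun l hl => by
      have h1 := Finset.mem_sdiff.mp hl
      exact ⟨hgap l h1.1 h1.2, hub l h1.1⟩
    have h := runLemmaAux ε c₀ hε hc₀ N hNε hN1 P P₀ hIoo hcl S'.card S'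
      (le_refl _) (e + 2) (by omega) hS'mem
    have hcast : (((e + 2 : ℕ) : ℝ) - 1) * ε - ε / 2 = (e : ℝ) * ε + ε / 2 := by
      push_cast; ring
    rw [hcast] at h
    exact h
  have hclB₁ : P B₁ ≤ P₀ B₁ + ENNReal.ofReal (c₀ * ε / 2) := by
    rw [hB₁def]
    exact hcl 1 e (le_refl _) h1e (by omega)
  calc P C = P (B₁ ∪ U') := by rw [hdecomp]
    _ ≤ P B₁ + P U' := measure_union_le _ _
    _ ≤ (P₀ B₁ + ENNReal.ofReal (c₀ * ε / 2)) + P₀ B₃ := add_le_add hclB₁ hIH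
    _ ≤ (P₀ B₁ + P₀ B₂) + P₀ B₃ := by gcongr
    _ = P₀ (B₁ ∪ B₂ ∪ B₃) := by
        rw [measure_union (Set.disjoint_union_left.mpr ⟨d13, d23⟩) mB₃,
          measure_union d12 mB₂]
    _ ≤ P₀ (Metric.thickening ε C) := measure_mono hsub

/-- If `P₀` has a density `p₀ ≥ c₀ > 0` on `[0,1]` and a probability measure
`P` on `[0,1]` satisfies `P(I_{jk}) - P₀(I_{jk}) ≤ c₀ε/2` for all `j, k`, then
`W_∞(P, P₀) ≤ 2ε`, i.e. `P(A) ≤ P₀(A^{2ε})` for all Borel `A`. -/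
theorem WInf_le_of_grid_closeness
    (c₀ ε : ℝ) (hc₀ : 0 < c₀) (hε : 0 < ε)
    (p₀ : ℝ → ℝ) (hp₀ : ∀ x ∈ Set.Icc (0 : ℝ) 1, c₀ ≤ p₀ x)
    (P₀ : Measure ℝ) [IsProbabilityMeasure P₀]
    (hP₀ : P₀ = volume.withDensity
      (fun x => ENNReal.ofReal ((Set.Icc (0 : ℝ) 1).indicator p₀ x)))
    (P : Measure ℝ) [IsProbabilityMeasure P] (hP : P (Set.Icc (0 : ℝ) 1) = 1)
    (N : ℕ) (hN : N = ⌈1 / ε⌉₊)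
    (hclose : ∀ j k : ℕ, 1 ≤ j → 1 ≤ k → j + k - 1 ≤ N →
      (P (gridUnion ε N j k)).toReal - (P₀ (gridUnion ε N j k)).toReal
        ≤ c₀ * ε / 2) :
    ∀ A : Set ℝ, MeasurableSet A → P A ≤ P₀ (Metric.thickening (2 * ε) A) := by
  classical
  -- numeric facts about N
  have hNnat : 1 ≤ N := by
    rw [hN]; exact Nat.one_le_ceil_iff.mpr (by positivity)
  have hNceil : (1 : ℝ) / ε ≤ (N : ℝ) := by rw [hN]; exact Nat.le_ceil _
  have hde : (1 : ℝ) / ε * ε = 1 := div_mul_cancel₀ 1 hε.ne'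
  have hNε : 1 ≤ (N : ℝ) * ε := by nlinarith
  have hNlt : (N : ℝ) < 1 / ε + 1 := by
    rw [hN]; exact Nat.ceil_lt_add_one (by positivity)
  have hN1lt : ((N : ℝ) - 1) * ε < 1 := by nlinarith
  have hN1 : ((N : ℝ) - 1) * ε ≤ 1 := hN1lt.le
  -- P₀ facts
  have hP₀compl : P₀ (Set.Icc (0 : ℝ) 1)ᶜ = 0 := by
    rw [hP₀, withDensity_apply _ measurableSet_Icc.compl]
    refine le_antisymm ?_ zero_le
    have h0 : ∫⁻ x in (Set.Icc (0:ℝ) 1)ᶜ, (0 : ℝ≥0∞) ∂volume = 0 := by simp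
    rw [← h0]
    refine setLIntegral_mono' measurableSet_Icc.compl fun x hx => ?_
    rw [Set.indicator_of_notMem (Set.notMem_of_mem_compl hx)]
    simp
  have hP₀sing : P₀ ({(1 : ℝ)} : Set ℝ) = 0 := by
    rw [hP₀]
    exact withDensity_absolutelyContinuous volume _ Real.volume_singleton
  have hP₀Icc : P₀ (Set.Icc (0 : ℝ) 1) = 1 := by
    have h := measure_add_measure_compl (μ := P₀) (measurableSet_Icc (a := (0:ℝ)) (b := 1))
    rw [hP₀compl, add_zero, measure_univ] at h
    exact h
  have hP₀Ico : 1 ≤ P₀ (Set.Ico (0 : ℝ) 1) := by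
    have hsub : Set.Icc (0:ℝ) 1 ⊆ Set.Ico 0 1 ∪ {1} := by
      intro x hx
      rcases lt_or_eq_of_le hx.2 with h | h
      · exact Or.inl ⟨hx.1, h⟩
      · exact Or.inr (by simp [h])
    calc (1 : ℝ≥0∞) = P₀ (Set.Icc 0 1) := hP₀Icc.symm
      _ ≤ P₀ (Set.Ico 0 1 ∪ {1}) := measure_mono hsub
      _ ≤ P₀ (Set.Ico 0 1) + P₀ {1} := measure_union_le _ _
      _ = P₀ (Set.Ico 0 1) := by rw [hP₀sing, add_zero]
  have hIoo : ∀ a b : ℝ, 0 ≤ a → b ≤ 1 →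
      ENNReal.ofReal (c₀ * (b - a)) ≤ P₀ (Set.Ioo a b) := by
    intro a b ha hb
    rcases le_or_gt b a with hba | hab
    · have : c₀ * (b - a) ≤ 0 := by nlinarith
      rw [ofReal_of_nonpos this]; exact zero_le
    rw [hP₀, withDensity_apply _ measurableSet_Ioo]
    have hsub : Set.Ioo a b ⊆ Set.Icc (0:ℝ) 1 := fun x hx => ⟨ha.trans hx.1.le, hx.2.le.trans hb⟩
    calc ENNReal.ofReal (c₀ * (b - a))
        = ENNReal.ofReal c₀ * volume (Set.Ioo a b) := by
          rw [Real.volume_Ioo, ← ofReal_mul hc₀.le]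
      _ = ∫⁻ _ in Set.Ioo a b, ENNReal.ofReal c₀ ∂volume := (setLIntegral_const _ _).symm
      _ ≤ ∫⁻ x in Set.Ioo a b, ENNReal.ofReal ((Set.Icc (0:ℝ) 1).indicator p₀ x) ∂volume := by
          refine setLIntegral_mono' measurableSet_Ioo fun x hx => ?_
          rw [Set.indicator_of_mem (hsub hx)]
          exact ofReal_le_ofReal (hp₀ x (hsub hx))
  have hcl : ∀ j k : ℕ, 1 ≤ j → 1 ≤ k → j + k - 1 ≤ N →
      P (gridUnion ε N j k) ≤ P₀ (gridUnion ε N j k) + ENNReal.ofReal (c₀ * ε / 2) := by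
    intro j k h1 h2 h3
    have h := hclose j k h1 h2 h3
    calc P (gridUnion ε N j k)
        = ENNReal.ofReal (P (gridUnion ε N j k)).toReal :=
          (ofReal_toReal (measure_ne_top _ _)).symm
      _ ≤ ENNReal.ofReal ((P₀ (gridUnion ε N j k)).toReal + c₀ * ε / 2) :=
          ofReal_le_ofReal (by linarith)
      _ = ENNReal.ofReal (P₀ (gridUnion ε N j k)).toReal + ENNReal.ofReal (c₀ * ε / 2) :=
          ofReal_add toReal_nonneg (by positivity)
      _ = P₀ (gridUnion ε N j k) + ENNReal.ofReal (c₀ * ε / 2) := by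
          rw [ofReal_toReal (measure_ne_top _ _)]
  -- main argument
  intro A hA
  set S := (Finset.Icc 1 N).filter (fun l => (gridInterval ε N l ∩ A).Nonempty) with hSdef
  set C := ⋃ l ∈ S, gridInterval ε N l with hCdef
  have hSmem : ∀ l ∈ S, 1 ≤ l ∧ l ≤ N ∧ (gridInterval ε N l ∩ A).Nonempty := by
    intro l hl
    rw [hSdef, Finset.mem_filter, Finset.mem_Icc] at hl
    exact ⟨hl.1.1, hl.1.2, hl.2⟩
  have hsub1 : A ∩ Set.Icc 0 1 ⊆ C := by
    rintro x ⟨hxA, hxI⟩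
    obtain ⟨l, h1l, hlN, hxl, -⟩ := gi_cover ε N hε hN hxI
    have hlS : l ∈ S := by
      rw [hSdef, Finset.mem_filter, Finset.mem_Icc]
      exact ⟨⟨h1l, hlN⟩, ⟨x, hxl, hxA⟩⟩
    exact Set.mem_biUnion hlS hxl
  have hPA : P A ≤ P C := by
    have hd : P (A \ Set.Icc 0 1) = 0 := by
      refine le_antisymm ?_ zero_le
      have hcompl : P (Set.Icc (0:ℝ) 1)ᶜ = 0 := by
        rw [prob_compl_eq_one_sub measurableSet_Icc, hP]
        simp
      calc P (A \ Set.Icc 0 1) ≤ P (Set.Icc (0:ℝ) 1)ᶜ := measure_mono fun x hx => hx.2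
        _ = 0 := hcompl
    calc P A = P ((A ∩ Set.Icc 0 1) ∪ (A \ Set.Icc 0 1)) := by rw [Set.inter_union_diff]
      _ ≤ P (A ∩ Set.Icc 0 1) + P (A \ Set.Icc 0 1) := measure_union_le _ _
      _ = P (A ∩ Set.Icc 0 1) := by rw [hd, add_zero]
      _ ≤ P C := measure_mono hsub1
  have hThick : Metric.thickening ε C ⊆ Metric.thickening (2 * ε) A := by
    intro x hx
    rw [Metric.mem_thickening_iff] at hx ⊢
    obtain ⟨y, hyC, hxy⟩ := hx
    obtain ⟨l, hlS, hyl⟩ := Set.mem_iUnion₂.mp hyC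
    obtain ⟨h1l, hlN, a, hal, haA⟩ := hSmem l hlS
    refine ⟨a, haA, ?_⟩
    have hda : dist y a ≤ ε := gi_dist ε N l hε hNε hlN hyl hal
    calc dist x a ≤ dist x y + dist y a := dist_triangle _ _ _
      _ < ε + ε := by linarith
      _ = 2 * ε := by ring
  suffices key : P C ≤ P₀ (Metric.thickening ε C) by
    calc P A ≤ P C := hPA
      _ ≤ P₀ (Metric.thickening ε C) := key
      _ ≤ P₀ (Metric.thickening (2 * ε) A) := measure_mono hThick
  by_cases h1S : 1 ∈ S
  · -- the first interval is active
    obtain ⟨e, h1e, heN, hrun, hgap⟩ := run_extract N S 1 h1S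
      (fun l hl => (hSmem l hl).1) (fun l hl => (hSmem l hl).2.1)
    by_cases hbig : N ≤ e + 1
    · -- thickened C covers [0,1)
      have hIcoSub : Set.Ico (0:ℝ) 1 ⊆ Metric.thickening ε C := by
        rintro x ⟨hx0, hx1⟩
        obtain ⟨l, h1l, hlN, hxl, hltN⟩ := gi_cover ε N hε hN ⟨hx0, hx1.le⟩
        by_cases hle : l ≤ e
        · exact Metric.self_subset_thickening hε C
            (Set.mem_biUnion (hrun l h1l hle) hxl)
        · push_neg at hle
          have hlN' : l = N := by omega
          have heN' : e = N - 1 := by omega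
          have hN2 : 2 ≤ N := by omega
          have hN2R : (2 : ℝ) ≤ (N : ℝ) := by exact_mod_cast hN2
          have hxge : ((N : ℝ) - 1) * ε ≤ x := by
            have := gi_subset_Ici ε N l hxl
            rw [hlN'] at this
            exact this
          rw [Metric.mem_thickening_iff]
          set m := max (((N : ℝ) - 2) * ε) (x - ε) with hm
          set y := (m + ((N : ℝ) - 1) * ε) / 2 with hy
          have hm1 : m < ((N : ℝ) - 1) * ε := by
            rw [hm]
            apply max_lt
            · nlinarith
            · nlinarith
          have hym : m ≤ y := by rw [hy]; linarith
          have hyIco : y ∈ gridInterval ε N (N - 1) := by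
            unfold gridInterval
            rw [if_neg (by omega : N - 1 ≠ N)]
            have hc : ((N - 1 : ℕ) : ℝ) = (N : ℝ) - 1 := by
              push_cast [Nat.cast_sub hNnat]; ring
            rw [hc]
            constructor
            · have := le_max_left (((N : ℝ) - 2) * ε) (x - ε)
              have h2 : ((N:ℝ) - 1 - 1) * ε = ((N:ℝ) - 2) * ε := by ring
              rw [h2]
              linarith [hym, this]
            · rw [hy]; linarith
          have hmemC : y ∈ C :=
            Set.mem_biUnion (hrun (N - 1) (by omega) (by omega)) hyIco
          refine ⟨y, hmemC, ?_⟩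
          rw [Real.dist_eq, abs_lt]
          have hxm : x - ε ≤ m := le_max_right _ _
          constructor
          · rw [hy]; nlinarith
          · rw [hy]; nlinarith
      calc P C ≤ 1 := prob_le_one
        _ ≤ P₀ (Set.Ico 0 1) := hP₀Ico
        _ ≤ P₀ (Metric.thickening ε C) := measure_mono hIcoSub
    · -- first run ends at e ≤ N - 2; right-gain argument
      push_neg at hbig
      rw [hCdef]
      exact firstRunCase ε c₀ hε hc₀ N hNε hN1 P P₀ hIoo hcl S e h1e hbig hrun hgap
        (fun l hl => (hSmem l hl).1) (fun l hl => (hSmem l hl).2.1)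
  · -- 1 ∉ S : all indices are ≥ 2
    have h := runLemmaAux ε c₀ hε hc₀ N hNε hN1 P P₀ hIoo hcl S.card S
      (le_refl _) 2 (le_refl _) (fun l hl => by
        obtain ⟨h1, h2, -⟩ := hSmem l hl
        refine ⟨?_, h2⟩
        rcases Nat.lt_or_ge l 2 with hc | hc
        · have hl1 : l = 1 := by omega
          rw [hl1] at hl
          exact absurd hl h1S
        · exact hc)
    rw [← hCdef] at h
    refine h.trans (measure_mono Set.inter_subset_left)
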